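/- Let X, P be metric spaces, W a normed vector space, H : X × P ⇒ W with 0 ∈ H(x̄, p̄), and S(p) := {x : 0 ∈ H(x, p)}. Suppose (a) there exist α, β, γ, c > 0 such that d(x, S(p)) ≤ c⁻¹ d(0, H(x, p) ∩ B(0, γ)) for all (x, p) ∈ B(x̄, α) × B(p̄, β), and (b) H has the Aubin property with respect to p uniformly in x around ((x̄, p̄), 0) with constant k > 0. Then S has the Aubin property around (p̄, x̄), and moreover lip S(p̄, x̄) ≤ c⁻¹ k. -/

import Mathlib

open Metric Set Filter Topology ENNReal

noncomputable def exc {α : Type*} [PseudoEMetricSpace α] (A B : Set α) : ℝ≥0∞ :=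
  ⨆ a ∈ A, EMetric.infEdist a B

lemma aux_inter {α : Type*} [PseudoEMetricSpace α] {z : α} {T B : Set α} {G : ℝ≥0∞}
    (h : EMetric.infEdist z T < G) (hB : ∀ w ∈ T, edist z w < G → w ∈ B) :
    EMetric.infEdist z (T ∩ B) ≤ EMetric.infEdist z T := by
  refine le_of_forall_gt_imp_ge_of_dense fun b hb => ?_
  have hIb' : EMetric.infEdist z T < min b G := lt_min hb h
  rw [EMetric.infEdist, infEDist_lt_iff] at hIb'
  obtain ⟨w, hwT, hw⟩ := hIb'
  have hwG : edist z w < G := lt_of_lt_of_le hw (min_le_right _ _)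
  exact le_trans (EMetric.infEdist_le_edist_of_mem ⟨hwT, hB w hwT hwG⟩)
    (le_of_lt (lt_of_lt_of_le hw (min_le_left _ _)))

theorem stmt14 {X P W : Type*} [MetricSpace X] [MetricSpace P]
    [NormedAddCommGroup W]
    (H : X → P → Set W) (x₀ : X) (p₀ : P) (h0 : (0:W) ∈ H x₀ p₀)
    (c k : ℝ) (hc : 0 < c) (hk : 0 < k)
    (ha : ∃ α > (0:ℝ), ∃ β > (0:ℝ), ∃ γ > (0:ℝ),
      ∀ x ∈ Metric.ball x₀ α, ∀ p ∈ Metric.ball p₀ β,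
        EMetric.infEdist x {x' | (0:W) ∈ H x' p} ≤
          ENNReal.ofReal c⁻¹ *
            EMetric.infEdist (0:W) (H x p ∩ Metric.ball (0:W) γ))
    (hb : ∃ U ∈ 𝓝 x₀, ∃ V ∈ 𝓝 p₀, ∃ W₀ ∈ 𝓝 (0:W), ∀ x ∈ U, ∀ p₁ ∈ V, ∀ p₂ ∈ V,
      exc (H x p₁ ∩ W₀) (H x p₂) ≤ ENNReal.ofReal (k * dist p₁ p₂)) :
    ∃ V' ∈ 𝓝 p₀, ∃ U' ∈ 𝓝 x₀, ∀ p₁ ∈ V', ∀ p₂ ∈ V',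
      exc ({x | (0:W) ∈ H x p₁} ∩ U') {x | (0:W) ∈ H x p₂} ≤
        ENNReal.ofReal (c⁻¹ * k * dist p₁ p₂) := by
  obtain ⟨α, hα, β, hβ, γ, hγ, hA⟩ := ha
  obtain ⟨U, hU, V, hV, W₀, hW₀, hB⟩ := hb
  obtain ⟨εU, hεU, hUb⟩ := Metric.mem_nhds_iff.mp hU
  obtain ⟨εV, hεV, hVb⟩ := Metric.mem_nhds_iff.mp hV
  have h0W : (0:W) ∈ W₀ := mem_of_mem_nhds hW₀
  set δ : ℝ := min β (min εV (γ / (2 * k))) with hδdef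
  have hδ : 0 < δ := lt_min hβ (lt_min hεV (by positivity))
  refine ⟨Metric.ball p₀ δ, Metric.ball_mem_nhds _ hδ,
    Metric.ball x₀ (min α εU), Metric.ball_mem_nhds _ (lt_min hα hεU), ?_⟩
  intro p₁ hp₁ p₂ hp₂
  have hp₁β : p₁ ∈ Metric.ball p₀ β :=
    Metric.ball_subset_ball (min_le_left _ _) hp₁
  have hp₂β : p₂ ∈ Metric.ball p₀ β :=
    Metric.ball_subset_ball (min_le_left _ _) hp₂
  have hp₁V : p₁ ∈ V := hVb (Metric.ball_subset_ball
    (le_trans (min_le_right _ _) (min_le_left _ _)) hp₁)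
  have hp₂V : p₂ ∈ V := hVb (Metric.ball_subset_ball
    (le_trans (min_le_right _ _) (min_le_left _ _)) hp₂)
  have hd : k * dist p₁ p₂ < γ := by
    have h1 : dist p₁ p₂ < 2 * (γ / (2 * k)) := by
      calc dist p₁ p₂ ≤ dist p₁ p₀ + dist p₀ p₂ := dist_triangle _ _ _
        _ < δ + δ := by
            rw [Metric.mem_ball] at hp₁ hp₂
            have := hp₂
            rw [dist_comm] at this
            linarith
        _ ≤ 2 * (γ / (2 * k)) := by
            have : δ ≤ γ / (2 * k) := le_trans (min_le_right _ _) (min_le_right _ _)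
            linarith
    have : k * dist p₁ p₂ < k * (2 * (γ / (2 * k))) :=
      mul_lt_mul_of_pos_left h1 hk
    calc k * dist p₁ p₂ < k * (2 * (γ / (2 * k))) := this
      _ = γ := by field_simp
  -- main bound
  refine iSup₂_le fun x hx => ?_
  obtain ⟨hx1, hx2⟩ := hx
  have hxα : x ∈ Metric.ball x₀ α := Metric.ball_subset_ball (min_le_left _ _) hx2
  have hxU : x ∈ U := hUb (Metric.ball_subset_ball (min_le_right _ _) hx2)
  -- 0 ∈ H x p₁ ∩ W₀, so infEdist 0 (H x p₂) ≤ k d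
  have h0mem : (0:W) ∈ H x p₁ ∩ W₀ := ⟨hx1, h0W⟩
  have hexc := hB x hxU p₁ hp₁V p₂ hp₂V
  have hinf : EMetric.infEdist (0:W) (H x p₂) ≤ ENNReal.ofReal (k * dist p₁ p₂) := by
    refine le_trans ?_ hexc
    exact le_iSup₂ (f := fun a (_ : a ∈ H x p₁ ∩ W₀) => EMetric.infEdist a (H x p₂)) _ h0mem
  have hltγ : EMetric.infEdist (0:W) (H x p₂) < ENNReal.ofReal γ :=
    lt_of_le_of_lt hinf (by
      exact (ENNReal.ofReal_lt_ofReal_iff hγ).mpr hd)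
  have hinter : EMetric.infEdist (0:W) (H x p₂ ∩ Metric.ball (0:W) γ) ≤
      ENNReal.ofReal (k * dist p₁ p₂) := by
    refine le_trans (aux_inter hltγ ?_) hinf
    intro w hw hwlt
    rw [Metric.mem_ball, dist_comm]
    exact (edist_lt_ofReal).mp hwlt
  have hmain := hA x hxα p₂ hp₂β
  calc EMetric.infEdist x {x' | (0:W) ∈ H x' p₂}
      ≤ ENNReal.ofReal c⁻¹ * EMetric.infEdist (0:W) (H x p₂ ∩ Metric.ball (0:W) γ) :=
        hmain
    _ ≤ ENNReal.ofReal c⁻¹ * ENNReal.ofReal (k * dist p₁ p₂) :=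
        mul_le_mul_right hinter _
    _ = ENNReal.ofReal (c⁻¹ * k * dist p₁ p₂) := by
        rw [← ENNReal.ofReal_mul (by positivity)]
        ring_nf
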